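/- If G has maximum SLEE among all graphs on n vertices with a given number r of cut vertices (with 1 ≤ r ≤ n - 3), then G is connected. -/
import Mathlib


open scoped Classical

variable {V : Type*}

/-- The signless Laplacian matrix `Q = D + A` of a graph. -/
noncomputable def sLap (G : SimpleGraph V) [Fintype V] : Matrix V V ℝ :=
  Matrix.diagonal (fun v => (G.degree v : ℝ)) + G.adjMatrix ℝ

theorem sLap_isHermitian (G : SimpleGraph V) [Fintype V] : (sLap G).IsHermitian := by
  unfold sLap
  rw [Matrix.IsHermitian, Matrix.conjTranspose_eq_transpose_of_trivial, Matrix.transpose_add,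
    Matrix.diagonal_transpose, SimpleGraph.transpose_adjMatrix]

/-- The Laplacian matrix `L = D - A` of a graph. -/
noncomputable def lap (G : SimpleGraph V) [Fintype V] : Matrix V V ℝ :=
  Matrix.diagonal (fun v => (G.degree v : ℝ)) - G.adjMatrix ℝ

theorem lap_isHermitian (G : SimpleGraph V) [Fintype V] : (lap G).IsHermitian := by
  unfold lap
  rw [Matrix.IsHermitian, Matrix.conjTranspose_eq_transpose_of_trivial, Matrix.transpose_sub,
    Matrix.diagonal_transpose, SimpleGraph.transpose_adjMatrix]

/-- The signless Laplacian Estrada index: the sum of `exp qᵢ` over the eigenvalues of `Q`. -/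
noncomputable def SLEE (G : SimpleGraph V) [Fintype V] : ℝ :=
  ∑ i, Real.exp ((sLap_isHermitian G).eigenvalues i)

/-- The Laplacian Estrada index: the sum of `exp μᵢ` over the eigenvalues of `L`. -/
noncomputable def LEE (G : SimpleGraph V) [Fintype V] : ℝ :=
  ∑ i, Real.exp ((lap_isHermitian G).eigenvalues i)

/-- Semi-edge walks of length `k` from `x` to `y`: a sequence of `k+1` vertices and `k`
edges of `G` such that consecutive vertices are (not necessarily distinct) endpoints of
the intervening edge. -/
def semiEdgeWalks (G : SimpleGraph V) (k : ℕ) (x y : V) :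
    Set ((Fin (k + 1) → V) × (Fin k → Sym2 V)) :=
  {w | w.1 0 = x ∧ w.1 (Fin.last k) = y ∧
    ∀ i : Fin k, w.2 i ∈ G.edgeSet ∧ w.1 i.castSucc ∈ w.2 i ∧ w.1 i.succ ∈ w.2 i}

/-- Closed semi-edge walks of length `k` in `G`. -/
def closedSemiEdgeWalks (G : SimpleGraph V) (k : ℕ) :
    Set ((Fin (k + 1) → V) × (Fin k → Sym2 V)) :=
  {w | w.1 0 = w.1 (Fin.last k) ∧
    ∀ i : Fin k, w.2 i ∈ G.edgeSet ∧ w.1 i.castSucc ∈ w.2 i ∧ w.1 i.succ ∈ w.2 i}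

/-- The number of connected components of a graph. -/
noncomputable def numComponents (G : SimpleGraph V) : ℕ := Nat.card G.ConnectedComponent

/-- A cut vertex: a vertex whose removal increases the number of connected components. -/
def IsCutVertex (G : SimpleGraph V) (v : V) : Prop :=
  numComponents G < numComponents (G.induce ({v}ᶜ : Set V))

/-- The number of cut vertices of a graph. -/
noncomputable def cutVertexCount (G : SimpleGraph V) [Fintype V] : ℕ :=
  (Finset.univ.filter (fun v => IsCutVertex G v)).card

/-- The graph obtained from `G` by adding the edge `uv`. -/
def addEdge (G : SimpleGraph V) (u v : V) : SimpleGraph V :=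
  G ⊔ SimpleGraph.fromEdgeSet {s(u, v)}

/-- A block of `G`: a maximal vertex set inducing a connected subgraph with no cut vertex. -/
def IsBlock (G : SimpleGraph V) (B : Set V) : Prop :=
  (G.induce B).Connected ∧ (∀ v : B, ¬ IsCutVertex (G.induce B) v) ∧
  ∀ C : Set V, B ⊆ C → (G.induce C).Connected → (∀ v : C, ¬ IsCutVertex (G.induce C) v) →
    B = C


section AuxProofs

open SimpleGraph

theorem trace_pow_eq {n : Type*} [Fintype n] [DecidableEq n] (A : Matrix n n ℝ)
    (hA : A.IsHermitian) (k : ℕ) :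
    (A ^ k).trace = ∑ i, (hA.eigenvalues i) ^ k := by
  have hU := (Matrix.mem_unitaryGroup_iff').mp (hA.eigenvectorUnitary).2
  have hU2 := (Matrix.mem_unitaryGroup_iff).mp (hA.eigenvectorUnitary).2
  have hsp := hA.spectral_theorem
  set U : Matrix n n ℝ := (hA.eigenvectorUnitary : Matrix n n ℝ) with hUdef
  set D : Matrix n n ℝ := Matrix.diagonal (RCLike.ofReal ∘ hA.eigenvalues) with hDdef
  have key : A ^ k = U * D ^ k * star U := by
    induction k with
    | zero =>
      rw [pow_zero, pow_zero, Matrix.mul_one]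
      exact hU2.symm
    | succ m ih =>
      rw [pow_succ, ih, pow_succ]
      conv_lhs => rw [hsp]
      calc U * D ^ m * star U * (U * D * star U)
          = U * D ^ m * (star U * U) * D * star U := by noncomm_ring
        _ = U * (D ^ m * D) * star U := by rw [hU]; noncomm_ring
  rw [key, Matrix.trace_mul_cycle, hU, Matrix.one_mul]
  rw [hDdef, Matrix.diagonal_pow, Matrix.trace_diagonal]
  simp

variable {V : Type*}

theorem SLEE_eq_tsum (G : SimpleGraph V) [Fintype V] :
    SLEE G = ∑' k : ℕ, ((sLap G ^ k).trace) / (Nat.factorial k) := by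
  have h1 : ∀ x : ℝ, Real.exp x = ∑' k : ℕ, x ^ k / (Nat.factorial k) := by
    intro x
    rw [Real.exp_eq_exp_ℝ, NormedSpace.exp_eq_tsum_div]
  unfold SLEE
  simp_rw [h1, trace_pow_eq (sLap G) (sLap_isHermitian G), Finset.sum_div]
  rw [Summable.tsum_finsetSum (fun i _ => Real.summable_pow_div_factorial _)]

theorem sLap_nonneg (G : SimpleGraph V) [Fintype V] (i j : V) : 0 ≤ sLap G i j := by
  unfold sLap
  simp only [Matrix.add_apply, Matrix.diagonal_apply, SimpleGraph.adjMatrix_apply]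
  positivity

theorem sLap_mono {G H : SimpleGraph V} [Fintype V] (h : G ≤ H) (i j : V) :
    sLap G i j ≤ sLap H i j := by
  have hdeg : ∀ v, G.degree v ≤ H.degree v := by
    intro v
    apply Finset.card_le_card
    intro x hx
    rw [SimpleGraph.mem_neighborFinset] at *
    exact h hx
  unfold sLap
  simp only [Matrix.add_apply, Matrix.diagonal_apply, SimpleGraph.adjMatrix_apply]
  gcongr
  · split <;> simp_all [Nat.cast_le, hdeg]
  · by_cases hij : G.Adj i j
    · simp [hij, h hij]
    · simp [hij]; split <;> norm_num

theorem pow_entry_mono {n : Type*} [Fintype n] [DecidableEq n] {A B : Matrix n n ℝ}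
    (h0 : ∀ i j, 0 ≤ A i j) (hle : ∀ i j, A i j ≤ B i j) (k : ℕ) :
    ∀ i j, 0 ≤ (A ^ k) i j ∧ (A ^ k) i j ≤ (B ^ k) i j := by
  induction k with
  | zero => intro i j; simp [Matrix.one_apply]; split <;> norm_num
  | succ m ih =>
    intro i j
    rw [pow_succ, pow_succ, Matrix.mul_apply, Matrix.mul_apply]
    constructor
    · exact Finset.sum_nonneg fun x _ => mul_nonneg (ih i x).1 (h0 x j)
    · exact Finset.sum_le_sum fun x _ => mul_le_mul ((ih i x).2) (hle x j) (h0 x j)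
        (le_trans (ih i x).1 (ih i x).2)

theorem trace_sLap (G : SimpleGraph V) [Fintype V] :
    (sLap G).trace = ∑ v, (G.degree v : ℝ) := by
  unfold sLap Matrix.trace
  simp [Matrix.diag, Matrix.add_apply]

theorem SLEE_lt_SLEE {G H : SimpleGraph V} [Fintype V] (h : G < H) : SLEE G < SLEE H := by
  obtain ⟨hle, hne⟩ := lt_iff_le_and_ne.mp h
  -- a vertex with strictly larger degree
  have hdeglt : ∃ v, G.degree v < H.degree v := by
    by_contra hc
    push_neg at hc
    apply hne
    ext x y
    refine ⟨fun hxy => hle hxy, fun hxy => ?_⟩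
    by_contra hg
    have hsub : G.neighborFinset x ⊂ H.neighborFinset x := by
      constructor
      · intro z hz; rw [SimpleGraph.mem_neighborFinset] at *; exact hle hz
      · intro hzz
        have := hzz (SimpleGraph.mem_neighborFinset _ _ _ |>.mpr hxy)
        rw [SimpleGraph.mem_neighborFinset] at this
        exact hg this
    exact absurd (hc x) (not_le.mpr (Finset.card_lt_card hsub))
  have hdegs : ∀ v, G.degree v ≤ H.degree v := by
    intro v
    apply Finset.card_le_card
    intro x hx
    rw [SimpleGraph.mem_neighborFinset] at *
    exact hle hx
  have htr : ∀ k : ℕ, (sLap G ^ k).trace ≤ (sLap H ^ k).trace := by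
    intro k
    rw [Matrix.trace, Matrix.trace]
    exact Finset.sum_le_sum fun i _ =>
      (pow_entry_mono (sLap_nonneg G) (sLap_mono hle) k i i).2
  have hsummable : ∀ (K : SimpleGraph V), Summable (fun k : ℕ => (sLap K ^ k).trace / (Nat.factorial k)) := by
    intro K
    have : (fun k : ℕ => (sLap K ^ k).trace / (Nat.factorial k)) =
        fun k : ℕ => ∑ i, ((sLap_isHermitian K).eigenvalues i) ^ k / (Nat.factorial k) := by
      funext k
      rw [trace_pow_eq _ (sLap_isHermitian K), Finset.sum_div]
    rw [this]
    exact summable_sum fun i _ => Real.summable_pow_div_factorial _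
  have hterm : ∀ k : ℕ, (sLap G ^ k).trace / (Nat.factorial k) ≤
      (sLap H ^ k).trace / (Nat.factorial k) := by
    intro k
    apply div_le_div_of_nonneg_right (htr k)
    positivity
  have h1 : (sLap G ^ 1).trace / (Nat.factorial 1) < (sLap H ^ 1).trace / (Nat.factorial 1) := by
    obtain ⟨v, hv⟩ := hdeglt
    simp only [pow_one, Nat.factorial_one, Nat.cast_one, div_one, trace_sLap]
    exact Finset.sum_lt_sum (fun i _ => by exact_mod_cast hdegs i)
      ⟨v, Finset.mem_univ v, by exact_mod_cast hv⟩
  calc SLEE G = ∑' k : ℕ, (sLap G ^ k).trace / (Nat.factorial k) := SLEE_eq_tsum G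
    _ < ∑' k : ℕ, (sLap H ^ k).trace / (Nat.factorial k) :=
        Summable.tsum_lt_tsum hterm h1 (hsummable G) (hsummable H)
    _ = SLEE H := (SLEE_eq_tsum H).symm

variable {W : Type*}


open SimpleGraph

/-- natural surjection on components -/
theorem ccMap_surjective {G H : SimpleGraph W} (h : G ≤ H) :
    Function.Surjective (ConnectedComponent.map (Hom.ofLE h)) := by
  intro c
  induction c using ConnectedComponent.ind with
  | _ v =>
    refine ⟨G.connectedComponentMk v, ?_⟩
    rw [ConnectedComponent.map_mk]
    rfl

theorem numComponents_le [Finite W] {G H : SimpleGraph W} (h : G ≤ H) :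
    numComponents H ≤ numComponents G :=
  Nat.card_le_card_of_surjective _ (ccMap_surjective h)

theorem numComponents_lt [Finite W] {G H : SimpleGraph W} (h : G ≤ H) {x y : W}
    (hxy : ¬ G.Reachable x y) (hxy' : H.Reachable x y) :
    numComponents H < numComponents G := by
  have hsurj := ccMap_surjective h
  have hninj : ¬ Function.Injective (ConnectedComponent.map (Hom.ofLE h)) := by
    intro hinj
    have : G.connectedComponentMk x = G.connectedComponentMk y := by
      apply hinj
      simpa [ConnectedComponent.map_mk, Hom.ofLE, ConnectedComponent.eq] using hxy'
    exact hxy (ConnectedComponent.eq.mp this)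
  haveI : Finite G.ConnectedComponent := Quot.finite _
  haveI : Finite H.ConnectedComponent := Quot.finite _
  haveI : Fintype G.ConnectedComponent := Fintype.ofFinite _
  haveI : Fintype H.ConnectedComponent := Fintype.ofFinite _
  rw [numComponents, numComponents, Nat.card_eq_fintype_card, Nat.card_eq_fintype_card]
  exact Fintype.card_lt_of_surjective_not_injective _ hsurj hninj

section Key
variable {G : SimpleGraph W} {a b : W} {N : W → W → Prop}

/-- reachability characterization after adding edges inside the union of the
components of `a` and `b` -/
theorem reach_sup_fromRel (hab : ¬ G.Reachable a b)
    (hN : ∀ x y, N x y → (G.Reachable x a ∨ G.Reachable x b) ∧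
      (G.Reachable y a ∨ G.Reachable y b)) (hNab : N a b) (x y : W) :
    (G ⊔ SimpleGraph.fromRel N).Reachable x y ↔ G.Reachable x y ∨
      ((G.Reachable x a ∨ G.Reachable x b) ∧ (G.Reachable y a ∨ G.Reachable y b)) := by
  have hne : a ≠ b := fun h => hab (h ▸ Reachable.refl a)
  set H := G ⊔ SimpleGraph.fromRel N with hH
  have hGH : G ≤ H := le_sup_left
  have hHab : H.Reachable a b := Adj.reachable (by
    rw [hH, sup_adj, SimpleGraph.fromRel_adj]
    exact Or.inr ⟨hne, Or.inl hNab⟩)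
  constructor
  · intro hr
    obtain ⟨w⟩ := hr
    induction w with
    | nil => exact Or.inl (Reachable.refl _)
    | @cons u p q hadj w ih =>
      have hstep : G.Reachable u p ∨
          ((G.Reachable u a ∨ G.Reachable u b) ∧ (G.Reachable p a ∨ G.Reachable p b)) := by
        rw [hH, sup_adj, SimpleGraph.fromRel_adj] at hadj
        rcases hadj with h | ⟨_, h | h⟩
        · exact Or.inl h.reachable
        · exact Or.inr (hN u p h)
        · exact Or.inr ⟨(hN p u h).2, (hN p u h).1⟩
      rcases hstep with h1 | ⟨hu, hp⟩
      · rcases ih with h2 | ⟨hp2, hq2⟩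
        · exact Or.inl (h1.trans h2)
        · exact Or.inr ⟨hp2.imp (fun t => h1.trans t) (fun t => h1.trans t), hq2⟩
      · rcases ih with h2 | ⟨_, hq2⟩
        · exact Or.inr ⟨hu, hp.imp (fun t => h2.symm.trans t) (fun t => h2.symm.trans t)⟩
        · exact Or.inr ⟨hu, hq2⟩
  · rintro (h | ⟨hx, hy⟩)
    · exact h.mono hGH
    · have hxa : H.Reachable x a := by
        rcases hx with h | h
        · exact h.mono hGH
        · exact (h.mono hGH).trans hHab.symm
      have hya : H.Reachable y a := by
        rcases hy with h | h
        · exact h.mono hGH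
        · exact (h.mono hGH).trans hHab.symm
      exact hxa.trans hya.symm

theorem numComponents_sup_fromRel [Finite W] (hab : ¬ G.Reachable a b)
    (hN : ∀ x y, N x y → (G.Reachable x a ∨ G.Reachable x b) ∧
      (G.Reachable y a ∨ G.Reachable y b)) (hNab : N a b) :
    numComponents (G ⊔ SimpleGraph.fromRel N) + 1 = numComponents G := by
  have hne : a ≠ b := fun h => hab (h ▸ Reachable.refl a)
  set H := G ⊔ SimpleGraph.fromRel N with hH
  have hGH : G ≤ H := le_sup_left
  set g : G.ConnectedComponent → H.ConnectedComponent := ConnectedComponent.map (Hom.ofLE hGH)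
    with hg
  have hgmk : ∀ v : W, g (G.connectedComponentMk v) = H.connectedComponentMk v := fun v => by
    rw [hg, ConnectedComponent.map_mk]; rfl
  have hkey := reach_sup_fromRel hab hN hNab
  have hfib : ∀ c c' : G.ConnectedComponent, g c = g c' → c = c' ∨
      ((c = G.connectedComponentMk a ∨ c = G.connectedComponentMk b) ∧
       (c' = G.connectedComponentMk a ∨ c' = G.connectedComponentMk b)) := by
    intro c c'
    induction c using ConnectedComponent.ind with | _ u => ?_
    induction c' using ConnectedComponent.ind with | _ v => ?_
    intro hgc
    rw [hgmk, hgmk, ConnectedComponent.eq] at hgc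
    rw [hkey] at hgc
    rcases hgc with h | ⟨hu, hv⟩
    · exact Or.inl (ConnectedComponent.eq.mpr h)
    · refine Or.inr ⟨?_, ?_⟩
      · exact hu.imp (fun t => ConnectedComponent.eq.mpr t) (fun t => ConnectedComponent.eq.mpr t)
      · exact hv.imp (fun t => ConnectedComponent.eq.mpr t) (fun t => ConnectedComponent.eq.mpr t)
  have hgab : g (G.connectedComponentMk a) = g (G.connectedComponentMk b) := by
    rw [hgmk, hgmk, ConnectedComponent.eq]
    rw [hkey]
    exact Or.inr ⟨Or.inl (Reachable.refl a), Or.inr (Reachable.refl b)⟩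
  have hmkne : G.connectedComponentMk a ≠ G.connectedComponentMk b :=
    fun h => hab (ConnectedComponent.eq.mp h)
  -- bijection from the subtype
  set S := {c : G.ConnectedComponent // c ≠ G.connectedComponentMk b} with hS
  have hbij : Function.Bijective (fun c : S => g c.1) := by
    constructor
    · rintro ⟨c, hc⟩ ⟨c', hc'⟩ hcc
      simp only at hcc
      rcases hfib c c' hcc with h | ⟨h1, h2⟩
      · exact Subtype.ext h
      · apply Subtype.ext
        rcases h1 with h1 | h1
        · rcases h2 with h2 | h2
          · show c = c'
            rw [h1, h2]
          · exact absurd h2 hc'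
        · exact absurd h1 hc
    · intro d
      obtain ⟨c, hc⟩ := ccMap_surjective hGH d
      by_cases hcb : c = G.connectedComponentMk b
      · refine ⟨⟨G.connectedComponentMk a, hmkne⟩, ?_⟩
        show g (G.connectedComponentMk a) = d
        rw [hgab, ← hcb]
        exact hc
      · exact ⟨⟨c, hcb⟩, hc⟩
  haveI : Finite G.ConnectedComponent := Quot.finite _
  haveI : Fintype G.ConnectedComponent := Fintype.ofFinite _
  have hcardS : Nat.card S + 1 = Nat.card G.ConnectedComponent := by
    rw [Nat.card_eq_fintype_card, Nat.card_eq_fintype_card, Fintype.card_subtype_compl]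
    have : Fintype.card {c : G.ConnectedComponent // c = G.connectedComponentMk b} = 1 :=
      Fintype.card_subtype_eq _
    rw [this]
    have := Fintype.card_pos_iff.mpr ⟨G.connectedComponentMk b⟩
    omega
  rw [numComponents, numComponents, ← hcardS, Nat.card_eq_of_bijective _ hbij]
end Key

/-- a walk avoiding `a` gives reachability in the induced graph on `{a}ᶜ` -/
theorem reach_induce_of_walk_avoid {G : SimpleGraph W} {a : W} {x y : W}
    (p : G.Walk x y) (hp : a ∉ p.support) (hx : x ∈ ({a}ᶜ : Set W)) (hy : y ∈ ({a}ᶜ : Set W)) :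
    (G.induce ({a}ᶜ : Set W)).Reachable ⟨x, hx⟩ ⟨y, hy⟩ := by
  induction p with
  | nil => rfl
  | @cons u v w hadj q ih =>
    have hv : v ∈ ({a}ᶜ : Set W) := by
      intro hv
      simp only [Set.mem_singleton_iff] at hv
      exact hp (by subst hv; simp [SimpleGraph.Walk.support_cons])
    have hq : a ∉ q.support := fun h => hp (by simp [SimpleGraph.Walk.support_cons, h])
    refine Reachable.trans (Adj.reachable ?_) (ih hq hv hy)
    show (G.induce ({a}ᶜ : Set W)).Adj ⟨u, hx⟩ ⟨v, hv⟩
    exact hadj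

/-- reachability in induced subgraph transfers to ambient graph -/
theorem reach_of_reach_induce {G : SimpleGraph W} {s : Set W} {x y : s}
    (h : (G.induce s).Reachable x y) : G.Reachable x.1 y.1 :=
  h.map (SimpleGraph.Embedding.induce s).toHom

theorem not_mem_support_of_isolated {G : SimpleGraph W} {a : W} (ha : ∀ z, ¬ G.Adj a z) :
    ∀ {u v : W} (p : G.Walk u v), u ≠ a → a ∉ p.support := by
  intro u v p
  induction p with
  | nil => intro hu h; simp at h; exact hu h.symm
  | @cons c d e hadj q ih =>
    intro hu h
    rw [SimpleGraph.Walk.support_cons] at h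
    rcases List.mem_cons.mp h with h | h
    · exact hu h.symm
    · have hd : d ≠ a := fun hd => ha c (hd ▸ hadj.symm)
      exact ih hd h

theorem eq_of_reachable_isolated {G : SimpleGraph W} {a : W} (ha : ∀ z, ¬ G.Adj a z)
    {z : W} (h : G.Reachable a z) : a = z := by
  obtain ⟨p⟩ := h
  cases p with
  | nil => rfl
  | cons hadj q => exact absurd hadj (ha _)

/-- removing an isolated vertex decreases the component count -/
theorem numComponents_induce_isolated [Finite W] {G : SimpleGraph W} {a : W}
    (ha : ∀ z, ¬ G.Adj a z) :
    numComponents (G.induce ({a}ᶜ : Set W)) + 1 ≤ numComponents G := by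
  set G' := G.induce ({a}ᶜ : Set W) with hG'
  set f : G'.ConnectedComponent → G.ConnectedComponent :=
    ConnectedComponent.map (SimpleGraph.Embedding.induce ({a}ᶜ : Set W)).toHom with hf
  have hfmk : ∀ v : ({a}ᶜ : Set W), f (G'.connectedComponentMk v) = G.connectedComponentMk v.1 :=
    fun v => by rw [hf, ConnectedComponent.map_mk]; rfl
  have hrange : ∀ c : G'.ConnectedComponent, f c ≠ G.connectedComponentMk a := by
    intro c
    induction c using ConnectedComponent.ind with | _ v => ?_
    rw [hfmk]
    intro h
    have hre := (ConnectedComponent.eq.mp h).symm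
    exact v.2 (eq_of_reachable_isolated ha hre).symm
  have hinj : Function.Injective (fun c : G'.ConnectedComponent =>
      (⟨f c, hrange c⟩ : {c : G.ConnectedComponent // c ≠ G.connectedComponentMk a})) := by
    intro c c' hcc
    have hfc : f c = f c' := congrArg Subtype.val hcc
    induction c using ConnectedComponent.ind with | _ u => ?_
    induction c' using ConnectedComponent.ind with | _ v => ?_
    rw [hfmk, hfmk, ConnectedComponent.eq] at hfc
    obtain ⟨p⟩ := hfc
    have hps : a ∉ p.support := not_mem_support_of_isolated ha p u.2
    exact ConnectedComponent.eq.mpr (by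
      have := reach_induce_of_walk_avoid p hps u.2 v.2
      simpa using this)
  have h1 : numComponents G' ≤ Nat.card {c : G.ConnectedComponent // c ≠ G.connectedComponentMk a} :=
    Nat.card_le_card_of_injective _ hinj
  have h2 : Nat.card {c : G.ConnectedComponent // c ≠ G.connectedComponentMk a} + 1 =
      numComponents G := by
    haveI : Finite G.ConnectedComponent := Quot.finite _
    haveI : Fintype G.ConnectedComponent := Fintype.ofFinite _
    rw [numComponents, Nat.card_eq_fintype_card, Nat.card_eq_fintype_card,
      Fintype.card_subtype_compl, Fintype.card_subtype_eq]
    have := Fintype.card_pos_iff.mpr ⟨G.connectedComponentMk a⟩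
    omega
  omega

/-- every component contains a non-cut vertex (e.g. a vertex of maximal distance) -/
theorem exists_noncut_reachable [Fintype W] (G : SimpleGraph W) (x : W) :
    ∃ a, G.Reachable x a ∧ ¬ IsCutVertex G a := by
  classical
  obtain ⟨a, haF, hamax⟩ := Finset.exists_max_image
    (Finset.univ.filter (fun z => G.Reachable x z)) (fun z => G.dist x z)
    ⟨x, Finset.mem_filter.mpr ⟨Finset.mem_univ x, Reachable.refl x⟩⟩
  rw [Finset.mem_filter] at haF
  have hxa : G.Reachable x a := haF.2
  refine ⟨a, hxa, ?_⟩
  have hamax' : ∀ z, G.Reachable x z → G.dist x z ≤ G.dist x a := by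
    intro z hz
    exact hamax z (Finset.mem_filter.mpr ⟨Finset.mem_univ z, hz⟩)
  -- key : reachability avoiding a
  have hkey : ∀ (u v : ({a}ᶜ : Set W)), G.Reachable u.1 v.1 →
      (G.induce ({a}ᶜ : Set W)).Reachable u v := by
    rintro ⟨u, hu⟩ ⟨v, hv⟩ hr
    have hu' : u ≠ a := hu
    have hv' : v ≠ a := hv
    by_cases hxu : G.Reachable x u
    · -- shortest paths from x avoid a
      have hxa' : x ≠ a ∨ True := Or.inr trivial
      have havoid : ∀ (z : W), G.Reachable x z → z ≠ a →
          (∃ p : G.Walk x z, a ∉ p.support) := by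
        intro z hz hza
        obtain ⟨p, hlen⟩ := hz.exists_walk_length_eq_dist
        refine ⟨p, fun hmem => ?_⟩
        have hxne : x ≠ a := by
          intro hxeq
          subst hxeq
          -- then dist x a = 0 is max, so all reachable z' have dist 0, z in particular
          have h0 : G.dist x z ≤ G.dist x x := hamax' z hz
          rw [SimpleGraph.dist_self] at h0
          have := (hz.dist_eq_zero_iff).mp (Nat.le_zero.mp h0)
          exact hza this.symm
        have h1 : G.dist x a ≤ (p.takeUntil a hmem).length :=
          SimpleGraph.dist_le _
        have h2 : (p.takeUntil a hmem).length + (p.dropUntil a hmem).length = p.length := by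
          rw [← SimpleGraph.Walk.length_append, SimpleGraph.Walk.take_spec]
        have h3 : (p.dropUntil a hmem).length ≠ 0 := by
          intro h0
          exact hza ((SimpleGraph.Walk.eq_of_length_eq_zero h0).symm)
        have h4 : G.dist x z ≤ G.dist x a := hamax' z hz
        omega
      obtain ⟨p, hp⟩ := havoid u hxu hu'
      obtain ⟨q, hq⟩ := havoid v (hxu.trans hr) hv'
      have hx' : x ∈ ({a}ᶜ : Set W) := by
        intro hxeq
        simp only [Set.mem_singleton_iff] at hxeq
        subst hxeq
        exact hp p.start_mem_support
      exact ((reach_induce_of_walk_avoid p hp hx' hu).symm.trans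
        (reach_induce_of_walk_avoid q hq hx' hv))
    · -- u not in x's component: any path from u to v avoids a
      obtain ⟨p⟩ := hr
      refine reach_induce_of_walk_avoid p (fun hmem => ?_) hu hv
      have : G.Reachable u a := SimpleGraph.Walk.reachable (p.takeUntil a hmem)
      exact hxu (hxa.trans this.symm)
  -- injectivity gives the count bound
  intro hcut
  rw [IsCutVertex] at hcut
  set G' := G.induce ({a}ᶜ : Set W) with hG'
  set f : G'.ConnectedComponent → G.ConnectedComponent :=
    ConnectedComponent.map (SimpleGraph.Embedding.induce ({a}ᶜ : Set W)).toHom with hf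
  have hfmk : ∀ v : ({a}ᶜ : Set W), f (G'.connectedComponentMk v) = G.connectedComponentMk v.1 :=
    fun v => by rw [hf, ConnectedComponent.map_mk]; rfl
  have hinj : Function.Injective f := by
    intro c c' hcc
    induction c using ConnectedComponent.ind with | _ u => ?_
    induction c' using ConnectedComponent.ind with | _ v => ?_
    rw [hfmk, hfmk, ConnectedComponent.eq] at hcc
    exact ConnectedComponent.eq.mpr (hkey u v hcc)
  have := Nat.card_le_card_of_injective f hinj
  rw [numComponents, numComponents] at hcut
  omega

theorem exists_gt_same_cuts [Fintype W] [Nonempty W] {G : SimpleGraph W} (hG : ¬ G.Connected) :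
    ∃ H : SimpleGraph W, G < H ∧ ∀ w, (IsCutVertex H w ↔ IsCutVertex G w) := by
  classical
  have hprecon : ¬ G.Preconnected := fun h => hG ⟨h⟩
  rw [SimpleGraph.Preconnected] at hprecon
  push_neg at hprecon
  obtain ⟨x, y, hxy⟩ := hprecon
  obtain ⟨a, hxa, hcuta⟩ := exists_noncut_reachable G x
  obtain ⟨b, hyb, hcutb⟩ := exists_noncut_reachable G y
  have hab : ¬ G.Reachable a b := fun h => hxy (hxa.trans (h.trans hyb.symm))
  have hne : a ≠ b := fun h => hab (h ▸ Reachable.refl a)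
  set N : W → W → Prop := fun p q => (p = a ∧ (q = b ∨ G.Adj b q)) ∨ (p = b ∧ G.Adj a q)
    with hNdef
  set H : SimpleGraph W := G ⊔ SimpleGraph.fromRel N with hHdef
  have hGH : G ≤ H := le_sup_left
  have hN : ∀ p q, N p q → (G.Reachable p a ∨ G.Reachable p b) ∧
      (G.Reachable q a ∨ G.Reachable q b) := by
    rintro p q (⟨rfl, hq⟩ | ⟨rfl, hq⟩)
    · refine ⟨Or.inl (Reachable.refl _), ?_⟩
      rcases hq with rfl | hq
      · exact Or.inr (Reachable.refl _)
      · exact Or.inr hq.symm.reachable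
    · exact ⟨Or.inr (Reachable.refl _), Or.inl hq.symm.reachable⟩
  have hNab : N a b := Or.inl ⟨rfl, Or.inl rfl⟩
  have hHadj : H.Adj a b := by
    rw [hHdef, SimpleGraph.sup_adj, SimpleGraph.fromRel_adj]
    exact Or.inr ⟨hne, Or.inl hNab⟩
  have hlt : G < H := by
    refine lt_of_le_of_ne hGH (fun hEq => ?_)
    rw [← hEq] at hHadj
    exact hab hHadj.reachable
  have hnum : numComponents H + 1 = numComponents G :=
    numComponents_sup_fromRel hab hN hNab
  refine ⟨H, hlt, fun w => ?_⟩
  by_cases hwa : w = a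
  · subst hwa
    -- both sides false
    have hHside : ¬ IsCutVertex H w := by
      rw [IsCutVertex]
      by_cases hiso : ∃ z, G.Adj w z
      · obtain ⟨z, hz⟩ := hiso
        have hzw : z ≠ w := hz.ne'
        have hzb : z ≠ b := fun h => hab (hz.reachable.trans (h ▸ Reachable.refl z)).symm.symm
        have hbw : b ≠ w := fun h => hne h.symm
        have hle' : G.induce ({w}ᶜ : Set W) ≤ H.induce ({w}ᶜ : Set W) := fun p q hpq => hGH hpq
        have hbmem : b ∈ ({w}ᶜ : Set W) := hbw
        have hzmem : z ∈ ({w}ᶜ : Set W) := hzw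
        have hreach : (H.induce ({w}ᶜ : Set W)).Reachable ⟨b, hbmem⟩ ⟨z, hzmem⟩ := by
          refine Adj.reachable ?_
          show H.Adj b z
          rw [hHdef, SimpleGraph.sup_adj, SimpleGraph.fromRel_adj]
          exact Or.inr ⟨hzb.symm.symm ∘ Eq.symm ∘ id ∘ fun h => h, Or.inl (Or.inr ⟨rfl, hz⟩)⟩
        have hnreach : ¬ (G.induce ({w}ᶜ : Set W)).Reachable ⟨b, hbmem⟩ ⟨z, hzmem⟩ := by
          intro h
          have h2 : G.Reachable b z := reach_of_reach_induce h
          exact hab (h2.trans hz.symm.reachable).symm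
        have hstrict := numComponents_lt hle' hnreach hreach
        rw [IsCutVertex] at hcuta
        omega
      · push_neg at hiso
        have hiso' : ∀ z, ¬ G.Adj w z := hiso
        have hEq : H.induce ({w}ᶜ : Set W) = G.induce ({w}ᶜ : Set W) := by
          ext ⟨p, hp⟩ ⟨q, hq⟩
          show H.Adj p q ↔ G.Adj p q
          rw [hHdef, SimpleGraph.sup_adj, SimpleGraph.fromRel_adj]
          have hp' : p ≠ w := hp
          have hq' : q ≠ w := hq
          constructor
          · rintro (h | ⟨hpq, (⟨rfl,_⟩|⟨rfl,h⟩) | (⟨rfl,_⟩|⟨rfl,h⟩)⟩)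
            · exact h
            · exact absurd rfl hp'
            · exact absurd h (hiso' q)
            · exact absurd rfl hq'
            · exact absurd h (hiso' p)
          · exact Or.inl
        rw [hEq]
        have hbound := numComponents_induce_isolated (G := G) (a := w) hiso'
        omega
    have hGside : ¬ IsCutVertex G w := hcuta
    exact iff_of_false hHside hGside
  · by_cases hwb : w = b
    · subst hwb
      have hHside : ¬ IsCutVertex H w := by
        rw [IsCutVertex]
        by_cases hiso : ∃ z, G.Adj w z
        · obtain ⟨z, hz⟩ := hiso
          have hzw : z ≠ w := hz.ne'
          have hza : z ≠ a := fun h => hab ((h ▸ hz.reachable : G.Reachable w a)).symm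
          have haw : a ≠ w := hne
          have hle' : G.induce ({w}ᶜ : Set W) ≤ H.induce ({w}ᶜ : Set W) := fun p q hpq => hGH hpq
          have hamem : a ∈ ({w}ᶜ : Set W) := haw
          have hzmem : z ∈ ({w}ᶜ : Set W) := hzw
          have hreach : (H.induce ({w}ᶜ : Set W)).Reachable ⟨a, hamem⟩ ⟨z, hzmem⟩ := by
            refine Adj.reachable ?_
            show H.Adj a z
            rw [hHdef, SimpleGraph.sup_adj, SimpleGraph.fromRel_adj]
            exact Or.inr ⟨hza.symm.symm ∘ Eq.symm, Or.inl (Or.inl ⟨rfl, Or.inr hz⟩)⟩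
          have hnreach : ¬ (G.induce ({w}ᶜ : Set W)).Reachable ⟨a, hamem⟩ ⟨z, hzmem⟩ := by
            intro h
            have h2 : G.Reachable a z := reach_of_reach_induce h
            exact hab (h2.trans hz.symm.reachable)
          have hstrict := numComponents_lt hle' hnreach hreach
          rw [IsCutVertex] at hcutb
          omega
        · push_neg at hiso
          have hiso' : ∀ z, ¬ G.Adj w z := hiso
          have hEq : H.induce ({w}ᶜ : Set W) = G.induce ({w}ᶜ : Set W) := by
            ext ⟨p, hp⟩ ⟨q, hq⟩
            show H.Adj p q ↔ G.Adj p q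
            rw [hHdef, SimpleGraph.sup_adj, SimpleGraph.fromRel_adj]
            have hp' : p ≠ w := hp
            have hq' : q ≠ w := hq
            constructor
            · rintro (h | ⟨hpq, (⟨rfl,hc⟩|⟨rfl,h⟩) | (⟨rfl,hc⟩|⟨rfl,h⟩)⟩)
              · exact h
              · rcases hc with rfl | hc
                · exact absurd rfl hq'
                · exact absurd hc (hiso' q)
              · exact absurd rfl hp'
              · rcases hc with rfl | hc
                · exact absurd rfl hp'
                · exact absurd hc (hiso' p)
              · exact absurd rfl hq'
            · exact Or.inl
          rw [hEq]
          have hbound := numComponents_induce_isolated (G := G) (a := w) hiso'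
          omega
      have hGside : ¬ IsCutVertex G w := hcutb
      exact iff_of_false hHside hGside
    · -- generic w
      have hamem : a ∈ ({w}ᶜ : Set W) := fun h => hwa (by simpa using h.symm)
      have hbmem : b ∈ ({w}ᶜ : Set W) := fun h => hwb (by simpa using h.symm)
      set a' : ({w}ᶜ : Set W) := ⟨a, hamem⟩
      set b' : ({w}ᶜ : Set W) := ⟨b, hbmem⟩
      set G' := G.induce ({w}ᶜ : Set W) with hG'def
      set N' : ({w}ᶜ : Set W) → ({w}ᶜ : Set W) → Prop := fun p q => N p.1 q.1 with hN'def
      have hHind : H.induce ({w}ᶜ : Set W) = G' ⊔ SimpleGraph.fromRel N' := by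
        ext ⟨p, hp⟩ ⟨q, hq⟩
        show (G ⊔ SimpleGraph.fromRel N).Adj p q ↔ _
        rw [SimpleGraph.sup_adj, SimpleGraph.fromRel_adj, SimpleGraph.sup_adj,
          SimpleGraph.fromRel_adj]
        constructor
        · rintro (h | ⟨hpq, h⟩)
          · exact Or.inl h
          · exact Or.inr ⟨fun hc => hpq (congrArg Subtype.val hc), h⟩
        · rintro (h | ⟨hpq, h⟩)
          · exact Or.inl h
          · exact Or.inr ⟨fun hc => hpq (Subtype.ext hc), h⟩
      have hab' : ¬ G'.Reachable a' b' := fun h => hab (reach_of_reach_induce h)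
      have hN' : ∀ p q, N' p q → (G'.Reachable p a' ∨ G'.Reachable p b') ∧
          (G'.Reachable q a' ∨ G'.Reachable q b') := by
        rintro ⟨p, hp⟩ ⟨q, hq⟩ hpq
        rcases hpq with ⟨hpa, hq2⟩ | ⟨hpb, hq2⟩
        · refine ⟨Or.inl (by rw [show (⟨p, hp⟩ : ({w}ᶜ : Set W)) = a' from Subtype.ext hpa]), ?_⟩
          rcases hq2 with hqb | hq2
          · exact Or.inr (by rw [show (⟨q, hq⟩ : ({w}ᶜ : Set W)) = b' from Subtype.ext hqb])
          · refine Or.inr (Adj.reachable ?_).symm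
            show G.Adj b q
            exact hq2
        · refine ⟨Or.inr (by rw [show (⟨p, hp⟩ : ({w}ᶜ : Set W)) = b' from Subtype.ext hpb]), ?_⟩
          refine Or.inl (Adj.reachable ?_).symm
          show G.Adj a q
          exact hq2
      have hNab' : N' a' b' := hNab
      have hnum' : numComponents (G' ⊔ SimpleGraph.fromRel N') + 1 = numComponents G' :=
        numComponents_sup_fromRel hab' hN' hNab'
      rw [IsCutVertex, IsCutVertex, hHind]
      rw [← hG'def]
      omega

end AuxProofs

/-- a graph with maximum SLEE among all graphs on `n` vertices with `r` cut
vertices (`1 ≤ r ≤ n - 3`) is connected. -/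
theorem connected_of_max_SLEE_with_cut_vertices [Fintype V] {n r : ℕ}
    (hn : Fintype.card V = n) (hr1 : 1 ≤ r) (hr2 : r ≤ n - 3)
    (G : SimpleGraph V) (hG : cutVertexCount G = r)
    (hmax : ∀ H : SimpleGraph V, cutVertexCount H = r → SLEE H ≤ SLEE G) :
    G.Connected := by
  by_contra hnc
  haveI : Nonempty V := by
    rw [← Fintype.card_pos_iff, hn]
    omega
  obtain ⟨H, hlt, hiff⟩ := exists_gt_same_cuts hnc
  have hcount : cutVertexCount H = r := by
    rw [← hG, cutVertexCount, cutVertexCount]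
    congr 1
    exact Finset.filter_congr (fun v _ => by exact hiff v)
  exact absurd (hmax H hcount) (not_le.mpr (SLEE_lt_SLEE hlt))
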